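/- Let Π be an exchangeable random partition of ℕ with asymptotic ranked frequencies (|Π(i)|^↓)_{i≥1}. If almost surely the singleton {1} is not a block of Π, then Σ_{i≥1} |Π(i)|^↓ = 1 almost surely. -/

import Mathlib

open MeasureTheory Filter Topology

/-- The `i`-th largest block size of the partition (equivalence relation) `R` restricted
to `{0,…,k-1}`. -/
noncomputable def rankedSize (R : ℕ → ℕ → Bool) (k i : ℕ) : ℕ :=
  ((((Finset.univ : Finset (Fin k)).image
      (fun j : Fin k => Finset.univ.filter fun i' : Fin k => R i' j)).val.map
        Finset.card).sort (· ≥ ·)).getD i 0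

set_option linter.unusedSectionVars false
set_option linter.deprecated false
set_option maxHeartbeats 1000000

namespace Stmt9
lemma list_sum_map_eq {M : Type*} [AddCommMonoid M] (G : ℕ → M) (l : List ℕ) :
    (l.map G).sum = ∑ i ∈ Finset.range l.length, G (l.getD i 0) := by
  induction l with
  | nil => simp
  | cons a l ih =>
    rw [List.map_cons, List.sum_cons, List.length_cons, Finset.sum_range_succ']
    simp [ih, add_comm]
variable (R : ℕ → ℕ → Bool)
def blockOf (n : ℕ) (j : Fin n) : Finset (Fin n) :=
  Finset.univ.filter fun i' : Fin n => R i' j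
def blocks (n : ℕ) : Finset (Finset (Fin n)) := Finset.univ.image (blockOf R n)
def sList (n : ℕ) : List ℕ := (((blocks R n).val).map Finset.card).sort (· ≥ ·)
lemma rankedSize_eq (n i : ℕ) : rankedSize R n i = (sList R n).getD i 0 := rfl

lemma sum_blocks_eq {M : Type*} [AddCommMonoid M] (G : ℕ → M) (n : ℕ) :
    ∑ b ∈ blocks R n, G b.card = ∑ i ∈ Finset.range (sList R n).length, G (rankedSize R n i) := by
  have h1 : ∑ b ∈ blocks R n, G b.card = (((blocks R n).val.map Finset.card).map G).sum := by
    rw [Multiset.map_map]; rfl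
  have h2 : ((blocks R n).val.map Finset.card) = ↑(sList R n) := (Multiset.sort_eq _ _).symm
  rw [h1, h2]
  simpa [rankedSize_eq] using list_sum_map_eq G (sList R n)

lemma rankedSize_antitone (n : ℕ) : Antitone (rankedSize R n) := by
  intro i j hij
  rcases lt_or_ge j (sList R n).length with hj | hj
  · have hi : i < (sList R n).length := lt_of_le_of_lt hij hj
    rw [rankedSize_eq, rankedSize_eq, List.getD_eq_getElem _ _ hj, List.getD_eq_getElem _ _ hi]
    rcases eq_or_lt_of_le hij with rfl | h
    · exact le_refl _
    · exact (Multiset.pairwise_sort _ (· ≥ ·)).rel_get_of_lt (by exact h)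
  · rw [rankedSize_eq (i := j), List.getD_eq_default _ _ hj]
    exact Nat.zero_le _

variable {R} (hR : Equivalence fun i j : ℕ => R i j = true)

include hR in
lemma blockOf_eq_iff {n : ℕ} {j0 j : Fin n} :
    blockOf R n j0 = blockOf R n j ↔ R j0 j = true := by
  constructor
  · intro h
    have : j0 ∈ blockOf R n j0 := by simp [blockOf, hR.refl]
    rw [h] at this; simpa [blockOf] using this
  · intro h
    ext i'
    simp only [blockOf, Finset.mem_filter, Finset.mem_univ, true_and]
    exact ⟨fun h1 => hR.trans h1 h, fun h1 => hR.trans h1 (hR.symm h)⟩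

include hR in
lemma blocks_pairwise_disjoint {n : ℕ} {b c : Finset (Fin n)}
    (hb : b ∈ blocks R n) (hc : c ∈ blocks R n) (hbc : b ≠ c) : Disjoint b c := by
  obtain ⟨j, -, rfl⟩ := Finset.mem_image.1 hb
  obtain ⟨j', -, rfl⟩ := Finset.mem_image.1 hc
  rw [Finset.disjoint_left]
  intro i hi hi'
  simp only [blockOf, Finset.mem_filter, Finset.mem_univ, true_and] at hi hi'
  exact hbc ((blockOf_eq_iff hR).2 (hR.trans (hR.symm hi) hi'))

include hR in
lemma sum_card_blocks_le (n : ℕ) : ∑ b ∈ blocks R n, b.card ≤ n := by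
  classical
  rw [← Finset.card_biUnion (fun b hb c hc hbc => blocks_pairwise_disjoint hR hb hc hbc)]
  simpa using Finset.card_le_univ ((blocks R n).biUnion fun b => b)

include hR in
lemma sum_range_rankedSize_le (n M : ℕ) :
    ∑ i ∈ Finset.range M, rankedSize R n i ≤ n := by
  have key : ∑ i ∈ Finset.range (sList R n).length, rankedSize R n i ≤ n := by
    have h := sum_blocks_eq R (id : ℕ → ℕ) n
    simp only [id] at h
    rw [← h]; exact sum_card_blocks_le hR n
  rcases le_total M (sList R n).length with h | h
  · exact le_trans (Finset.sum_le_sum_of_subset (Finset.range_subset_range.2 h)) key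
  · rw [← Finset.sum_subset (Finset.range_subset_range.2 h)
      (fun i _ hi => by
        rw [rankedSize_eq, List.getD_eq_default]
        exact le_of_not_gt fun hlt => hi (Finset.mem_range.2 hlt))]
    exact key

include hR in
lemma succ_mul_rankedSize_le (n i : ℕ) : (i + 1) * rankedSize R n i ≤ n := by
  calc (i + 1) * rankedSize R n i = ∑ j ∈ Finset.range (i+1), rankedSize R n i := by
        simp [Finset.sum_const, mul_comm]
    _ ≤ ∑ j ∈ Finset.range (i+1), rankedSize R n j :=
        Finset.sum_le_sum fun j hj => rankedSize_antitone R n (Nat.lt_succ_iff.1 (Finset.mem_range.1 hj))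
    _ ≤ n := sum_range_rankedSize_le hR n _

lemma tsum_rankedSize (G : ℕ → ℝ) (hG : G 0 = 0) (n : ℕ) :
    ∑' i, G (rankedSize R n i) = ∑ b ∈ blocks R n, G b.card := by
  rw [sum_blocks_eq R G n]
  exact tsum_eq_sum fun i hi => by
    rw [rankedSize_eq, List.getD_eq_default _ _ (le_of_not_gt fun hlt => hi (Finset.mem_range.2 hlt)), hG]

def phi (m : ℕ) (x : ℝ) : ℝ := x * (1 - (1 - x) ^ m)

include hR in
lemma card_fiber {n : ℕ} {b : Finset (Fin n)} (hb : b ∈ blocks R n) :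
    (Finset.univ.filter fun j0 : Fin n => blockOf R n j0 = b).card = b.card := by
  obtain ⟨j, -, rfl⟩ := Finset.mem_image.1 hb
  congr 1
  ext j0
  simp only [Finset.mem_filter, Finset.mem_univ, true_and]
  rw [blockOf_eq_iff hR]
  simp [blockOf]

include hR in
lemma sum_over_points {n : ℕ} (F : ℕ → ℝ) :
    ∑ j0 : Fin n, F (blockOf R n j0).card = ∑ b ∈ blocks R n, (b.card : ℝ) * F b.card := by
  classical
  rw [← Finset.sum_fiberwise_of_maps_to
    (fun j0 _ => Finset.mem_image_of_mem (blockOf R n) (Finset.mem_univ j0))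
    (fun j0 => F (blockOf R n j0).card)]
  refine Finset.sum_congr rfl fun b hb => ?_
  rw [Finset.sum_congr rfl (fun j0 hj0 => by rw [(Finset.mem_filter.1 hj0).2]),
    Finset.sum_const, card_fiber hR hb, nsmul_eq_mul]

include hR in
lemma card_filter_vec {n m : ℕ} (j0 : Fin n) :
    ((Finset.univ.filter fun v : Fin m → Fin n => ∃ l : Fin m, R j0 (v l) = true).card : ℝ)
      = (n:ℝ)^m - ((n:ℝ) - (blockOf R n j0).card)^m := by
  classical
  have hneg : (Finset.univ.filter fun v : Fin m → Fin n => ¬ ∃ l : Fin m, R j0 (v l) = true)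
      = Fintype.piFinset (fun _ : Fin m => (blockOf R n j0)ᶜ) := by
    ext v
    simp only [Finset.mem_filter, Finset.mem_univ, true_and, not_exists,
      Fintype.mem_piFinset, Finset.mem_compl]
    constructor
    · intro h l hl
      exact h l (hR.symm (by simpa [blockOf] using hl))
    · intro h l hl
      exact h l (by simp [blockOf, hR.symm hl])
  have hsplit := Finset.card_filter_add_card_filter_not
    (s := (Finset.univ : Finset (Fin m → Fin n)))
    (p := fun v => ∃ l : Fin m, R j0 (v l) = true)
  have hnegcard : (Finset.univ.filter fun v : Fin m → Fin n =>
      ¬ ∃ l : Fin m, R j0 (v l) = true).card = (n - (blockOf R n j0).card)^m := by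
    rw [hneg, Fintype.card_piFinset]
    simp [Finset.card_compl]
  have huniv : (Finset.univ : Finset (Fin m → Fin n)).card = n ^ m := by
    simp [Finset.card_univ]
  have hle : (blockOf R n j0).card ≤ n := by
    simpa using Finset.card_le_univ (blockOf R n j0)
  rw [hnegcard, huniv] at hsplit
  have hcast := congrArg (Nat.cast : ℕ → ℝ) hsplit
  push_cast [Nat.cast_sub hle] at hcast
  linarith

lemma card_filter_tuple {n m : ℕ} :
    (Finset.univ.filter fun t : Fin (m+1) → Fin n =>
        ∃ l : Fin m, R (t 0) (t l.succ) = true).card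
      = ∑ j0 : Fin n,
        (Finset.univ.filter fun v : Fin m → Fin n => ∃ l : Fin m, R j0 (v l) = true).card := by
  classical
  rw [← Fintype.card_subtype]
  have e : {t : Fin (m+1) → Fin n // ∃ l : Fin m, R (t 0) (t l.succ) = true}
      ≃ Σ j0 : Fin n, {v : Fin m → Fin n // ∃ l : Fin m, R j0 (v l) = true} :=
    (Equiv.subtypeEquiv (Fin.consEquiv (fun _ : Fin (m+1) => Fin n)).symm
      (fun t => by simp [Fin.consEquiv, Fin.tail])).trans
    (Equiv.subtypeProdEquivSigmaSubtype
      (fun (j0 : Fin n) (v : Fin m → Fin n) => ∃ l : Fin m, R j0 (v l) = true))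
  rw [Fintype.card_congr e, Fintype.card_sigma]
  exact Finset.sum_congr rfl fun j0 _ => Fintype.card_subtype _

include hR in
lemma master_identity {n m : ℕ} (hn : 1 ≤ n) :
    ((Finset.univ.filter fun t : Fin (m+1) → Fin n =>
        ∃ l : Fin m, R (t 0) (t l.succ) = true).card : ℝ) / (n:ℝ)^(m+1)
      = ∑' i, phi m ((rankedSize R n i : ℝ)/n) := by
  have hn' : (0:ℝ) < n := by exact_mod_cast hn
  rw [tsum_rankedSize (G := fun s : ℕ => phi m ((s:ℝ)/n)) (by simp [phi]) n]
  rw [card_filter_tuple]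
  push_cast
  rw [Finset.sum_div]
  have : ∀ j0 : Fin n, ((Finset.univ.filter fun v : Fin m → Fin n =>
      ∃ l : Fin m, R j0 (v l) = true).card : ℝ) / (n:ℝ)^(m+1)
      = (fun c : ℕ => ((n:ℝ)^m - ((n:ℝ) - c)^m) / (n:ℝ)^(m+1)) (blockOf R n j0).card := by
    intro j0; rw [card_filter_vec hR j0]
  rw [Finset.sum_congr rfl fun j0 _ => this j0,
    sum_over_points hR (fun c : ℕ => ((n:ℝ)^m - ((n:ℝ) - c)^m) / (n:ℝ)^(m+1))]
  refine Finset.sum_congr rfl fun b hb => ?_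
  have hble : (b.card : ℝ) ≤ n := by
    obtain ⟨j, -, rfl⟩ := Finset.mem_image.1 hb
    exact_mod_cast (by simpa using Finset.card_le_univ (blockOf R n j))
  unfold phi
  have h1 : (1 : ℝ) - (b.card : ℝ)/n = ((n:ℝ) - b.card)/n := by field_simp
  rw [h1, div_pow, pow_succ]
  field_simp

lemma continuous_phi (m : ℕ) : Continuous (phi m) := by
  unfold phi; continuity

lemma phi_nonneg {m : ℕ} {x : ℝ} (h0 : 0 ≤ x) (h1 : x ≤ 1) : 0 ≤ phi m x := by
  have : (1 - x) ^ m ≤ 1 := pow_le_one₀ (by linarith) (by linarith)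
  have := mul_nonneg h0 (by linarith : (0:ℝ) ≤ 1 - (1-x)^m)
  simpa [phi] using this

lemma phi_le_self {m : ℕ} {x : ℝ} (h0 : 0 ≤ x) (h1 : x ≤ 1) : phi m x ≤ x := by
  have h2 : (0:ℝ) ≤ (1 - x) ^ m := pow_nonneg (by linarith) m
  calc phi m x ≤ x * 1 := by
        unfold phi; apply mul_le_mul_of_nonneg_left (by linarith) h0
    _ = x := mul_one x

lemma phi_le_sq {m : ℕ} {x : ℝ} (h0 : 0 ≤ x) (h1 : x ≤ 1) : phi m x ≤ m * x^2 := by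
  have hb : 1 - (m:ℝ) * x ≤ (1 - x) ^ m := by
    have := one_add_mul_le_pow (a := -x) (by linarith) m
    simpa [mul_comm, ← sub_eq_add_neg] using this
  calc phi m x = x * (1 - (1-x)^m) := rfl
    _ ≤ x * ((m:ℝ) * x) := mul_le_mul_of_nonneg_left (by linarith) h0
    _ = m * x^2 := by ring

lemma phi_mono {x : ℝ} (h0 : 0 ≤ x) (h1 : x ≤ 1) : Monotone fun m => phi m x := by
  intro a b hab
  have : (1 - x) ^ b ≤ (1 - x) ^ a := pow_le_pow_of_le_one (by linarith) (by linarith) hab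
  exact mul_le_mul_of_nonneg_left (by linarith) h0

lemma phi_tendsto {x : ℝ} (h0 : 0 ≤ x) (h1 : x ≤ 1) :
    Tendsto (fun m => phi m x) atTop (𝓝 x) := by
  rcases eq_or_lt_of_le h0 with rfl | hx
  · simpa [phi] using tendsto_const_nhds
  · have h2 : |1 - x| < 1 := by rw [abs_lt]; constructor <;> linarith
    have := tendsto_pow_atTop_nhds_zero_of_lt_one (by linarith : (0:ℝ) ≤ 1 - x) (by linarith)
    have := (tendsto_const_nhds (x := x)).mul ((tendsto_const_nhds (x := (1:ℝ))).sub this)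
    simpa [phi] using this

lemma summable_inv_sq : Summable (fun i : ℕ => (1 / (i+1) : ℝ)^2) := by
  have := Real.summable_one_div_nat_pow.2 (le_refl 2)
  rw [← summable_nat_add_iff 1] at this
  simpa [div_pow] using this

lemma ratio_nonneg (R : ℕ → ℕ → Bool) (n i : ℕ) : 0 ≤ (rankedSize R n i : ℝ) / n := by
  positivity

lemma ratio_le (hR : Equivalence fun i j : ℕ => R i j = true) (n i : ℕ) :
    (rankedSize R n i : ℝ) / n ≤ 1 / (i+1) := by
  rcases Nat.eq_zero_or_pos n with rfl | hn
  · have : rankedSize R 0 i = 0 := Nat.le_zero.1 (le_trans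
      (Nat.le_mul_of_pos_left _ (Nat.succ_pos i)) (succ_mul_rankedSize_le hR 0 i))
    simp [this]
    positivity
  · have h := succ_mul_rankedSize_le hR n i
    have hn' : (0:ℝ) < n := by exact_mod_cast hn
    rw [div_le_div_iff₀ hn' (by positivity)]
    calc (rankedSize R n i : ℝ) * (i+1) = ((i+1) * rankedSize R n i : ℕ) := by push_cast; ring
      _ ≤ (n:ℝ) := by exact_mod_cast h
      _ = 1 * n := (one_mul _).symm

lemma ratio_le_one (hR' : Equivalence fun i j : ℕ => R i j = true) (n i : ℕ) :
    (rankedSize R n i : ℝ) / n ≤ 1 :=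
  le_trans (ratio_le hR' n i) (by
    rw [div_le_one (by positivity)]
    exact_mod_cast Nat.le_add_left 1 i)

section PW
variable {g : ℕ → ℝ} (hR' : Equivalence fun i j : ℕ => R i j = true)
  (htend : ∀ i, Tendsto (fun n => (rankedSize R n i : ℝ) / n) atTop (𝓝 (g i)))

include htend in
lemma f_nonneg (i : ℕ) : 0 ≤ g i :=
  ge_of_tendsto (htend i) (Eventually.of_forall fun n => ratio_nonneg R n i)

include hR' htend in
lemma f_le (i : ℕ) : g i ≤ 1 / (i+1) :=
  le_of_tendsto (htend i) (Eventually.of_forall fun n => ratio_le hR' n i)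

include hR' htend in
lemma f_le_one (i : ℕ) : g i ≤ 1 :=
  le_of_tendsto (htend i) (Eventually.of_forall fun n => ratio_le_one hR' n i)

include hR' htend in
lemma sum_range_f_le_one (M : ℕ) : ∑ i ∈ Finset.range M, g i ≤ 1 := by
  have h1 : Tendsto (fun n => ∑ i ∈ Finset.range M, (rankedSize R n i : ℝ) / n)
      atTop (𝓝 (∑ i ∈ Finset.range M, g i)) :=
    tendsto_finset_sum _ fun i _ => htend i
  refine le_of_tendsto h1 ?_
  filter_upwards [eventually_ge_atTop 1] with n hn
  have hn' : (0:ℝ) < n := by exact_mod_cast hn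
  rw [← Finset.sum_div, div_le_one hn']
  calc (∑ i ∈ Finset.range M, (rankedSize R n i : ℝ))
      = ((∑ i ∈ Finset.range M, rankedSize R n i : ℕ) : ℝ) := by push_cast; rfl
    _ ≤ (n:ℝ) := by exact_mod_cast sum_range_rankedSize_le hR' n M

lemma summable_f (h0 : ∀ i, 0 ≤ g i) (hs : ∀ M, ∑ i ∈ Finset.range M, g i ≤ 1) :
    Summable g :=
  summable_of_sum_range_le h0 hs

include hR' htend in
lemma tsum_f_le_one : ∑' i, g i ≤ 1 :=
  Summable.tsum_le_of_sum_range_le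
    (summable_f (f_nonneg htend) (sum_range_f_le_one hR' htend))
    (sum_range_f_le_one hR' htend)

include hR' htend in
lemma tendsto_tsum_phi_n (m : ℕ) :
    Tendsto (fun n => ∑' i, phi m ((rankedSize R n i : ℝ) / n)) atTop
      (𝓝 (∑' i, phi m (g i))) := by
  refine tendsto_tsum_of_dominated_convergence
    (bound := fun i : ℕ => (m : ℝ) * (1 / (i+1))^2) ?_ ?_ ?_
  · exact (summable_inv_sq.mul_left _)
  · exact fun i => ((continuous_phi m).tendsto (g i)).comp (htend i)
  · refine Eventually.of_forall fun n => fun i => ?_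
    have h0 := ratio_nonneg R n i
    have h1 := ratio_le_one hR' n i
    have h2 := ratio_le hR' n i
    rw [Real.norm_eq_abs, abs_of_nonneg (phi_nonneg h0 h1)]
    calc phi m ((rankedSize R n i : ℝ)/n) ≤ m * ((rankedSize R n i : ℝ)/n)^2 :=
          phi_le_sq h0 h1
      _ ≤ m * (1/(i+1))^2 := by
          apply mul_le_mul_of_nonneg_left _ (Nat.cast_nonneg m)
          apply pow_le_pow_left₀ h0 h2

include hR' htend in
lemma tendsto_tsum_phi_m :
    Tendsto (fun m => ∑' i, phi m (g i)) atTop (𝓝 (∑' i, g i)) := by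
  refine tendsto_tsum_of_dominated_convergence (bound := g) ?_ ?_ ?_
  · exact summable_f (f_nonneg htend) (sum_range_f_le_one hR' htend)
  · exact fun i => phi_tendsto (f_nonneg htend i) (f_le_one hR' htend i)
  · refine Eventually.of_forall fun m => fun i => ?_
    rw [Real.norm_eq_abs, abs_of_nonneg (phi_nonneg (f_nonneg htend i) (f_le_one hR' htend i))]
    exact phi_le_self (f_nonneg htend i) (f_le_one hR' htend i)

include hR' htend in
lemma mono_tsum_phi : Monotone (fun m => ∑' i, phi m (g i)) := by
  intro a b hab
  have hsum : ∀ m : ℕ, Summable (fun i => phi m (g i)) := fun m =>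
    (summable_f (f_nonneg htend) (sum_range_f_le_one hR' htend)).of_nonneg_of_le
      (fun i => phi_nonneg (f_nonneg htend i) (f_le_one hR' htend i))
      (fun i => phi_le_self (f_nonneg htend i) (f_le_one hR' htend i))
  exact Summable.tsum_le_tsum (fun i => phi_mono (f_nonneg htend i) (f_le_one hR' htend i) hab)
    (hsum a) (hsum b)
end PW

lemma exists_perm_extend {k n : ℕ} (h : k ≤ n) (t : Fin k → Fin n)
    (ht : Function.Injective t) :
    ∃ σ : Equiv.Perm (Fin n), ∀ l : Fin k, σ (Fin.castLE h l) = t l := by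
  classical
  let e : {x : Fin n // x ∈ Set.range (Fin.castLE h)} ≃ {x : Fin n // x ∈ Set.range t} :=
    ((Equiv.ofInjective _ (Fin.castLE_injective h)).symm.trans (Equiv.ofInjective t ht))
  refine ⟨e.extendSubtype, fun l => ?_⟩
  rw [e.extendSubtype_apply_of_mem _ ⟨l, rfl⟩]
  have h1 : (Equiv.ofInjective _ (Fin.castLE_injective h)).symm
      ⟨Fin.castLE h l, ⟨l, rfl⟩⟩ = l := by
    rw [Equiv.symm_apply_eq, Equiv.ofInjective_apply]
  show ((Equiv.ofInjective t ht) ((Equiv.ofInjective _ (Fin.castLE_injective h)).symm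
      ⟨Fin.castLE h l, ⟨l, rfl⟩⟩) : Fin n) = t l
  rw [h1, Equiv.ofInjective_apply]

lemma card_inj_tuples {k n : ℕ} :
    (Finset.univ.filter fun t : Fin k → Fin n => Function.Injective t).card
      = n.descFactorial k := by
  classical
  rw [← Fintype.card_subtype,
    Fintype.card_congr (Equiv.subtypeInjectiveEquivEmbedding (Fin k) (Fin n))]
  simp [Fintype.card_embedding_eq]

lemma tendsto_descFactorial (k : ℕ) :
    Tendsto (fun n : ℕ => (n.descFactorial k : ℝ) / (n:ℝ)^k) atTop (𝓝 1) := by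
  have key : ∀ᶠ n : ℕ in atTop, (n.descFactorial k : ℝ) / (n:ℝ)^k
      = ∏ i ∈ Finset.range k, (1 - (i:ℝ)/n) := by
    filter_upwards [eventually_ge_atTop (max k 1)] with n hn
    have hnk : k ≤ n := le_trans (le_max_left _ _) hn
    have hn0 : (0:ℝ) < n := by
      exact_mod_cast lt_of_lt_of_le (Nat.lt_of_lt_of_le Nat.zero_lt_one (le_max_right k 1)) hn
    rw [Nat.descFactorial_eq_prod_range, Nat.cast_prod]
    have h1 : ∀ i ∈ Finset.range k, ((n - i : ℕ) : ℝ) = (n:ℝ) - i := fun i hi =>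
      Nat.cast_sub (le_trans (le_of_lt (Finset.mem_range.1 hi)) hnk)
    rw [Finset.prod_congr rfl h1,
      show (n:ℝ)^k = ∏ _i ∈ Finset.range k, (n:ℝ) by simp,
      ← Finset.prod_div_distrib]
    exact Finset.prod_congr rfl fun i _ => by field_simp
  have h2 : Tendsto (fun n : ℕ => ∏ i ∈ Finset.range k, (1 - (i:ℝ)/n)) atTop
      (𝓝 (∏ _i ∈ Finset.range k, (1:ℝ))) :=
    tendsto_finset_prod _ fun i _ => by
      simpa using (tendsto_const_nhds (x := (1:ℝ))).sub
        (tendsto_const_div_atTop_nhds_zero_nat (i:ℝ))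
  rw [Finset.prod_const_one] at h2
  exact h2.congr' (key.mono fun n hn => hn.symm)

section Prob
variable {Ω : Type*} [MeasurableSpace Ω] {R : Ω → ℕ → ℕ → Bool}

lemma meas_R (hRmeas : Measurable R) (a b : ℕ) : Measurable fun ω => R ω a b :=
  (measurable_pi_apply b).comp ((measurable_pi_apply a).comp hRmeas)

def Ev (R : Ω → ℕ → ℕ → Bool) (m n : ℕ) (t : Fin (m+1) → Fin n) : Set Ω :=
  ⋃ l : Fin m, (fun ω => R ω (t 0) (t l.succ)) ⁻¹' {true}

def Qset (R : Ω → ℕ → ℕ → Bool) (m : ℕ) : Set Ω :=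
  ⋃ l : Fin m, (fun ω => R ω 0 (l+1)) ⁻¹' {true}

lemma mem_Ev {m n : ℕ} {t : Fin (m+1) → Fin n} {ω : Ω} :
    ω ∈ Ev R m n t ↔ ∃ l : Fin m, R ω (t 0) (t l.succ) = true := by
  simp [Ev]

lemma mem_Qset {m : ℕ} {ω : Ω} :
    ω ∈ Qset R m ↔ ∃ l : Fin m, R ω 0 (l+1) = true := by
  simp [Qset]

lemma measurableSet_Ev (hRmeas : Measurable R) {m n : ℕ} (t : Fin (m+1) → Fin n) :
    MeasurableSet (Ev R m n t) :=
  MeasurableSet.iUnion fun l => (meas_R hRmeas _ _) (measurableSet_singleton true)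

lemma measurableSet_Qset (hRmeas : Measurable R) (m : ℕ) :
    MeasurableSet (Qset R m) :=
  MeasurableSet.iUnion fun l => (meas_R hRmeas _ _) (measurableSet_singleton true)

noncomputable def Tstat (R : Ω → ℕ → ℕ → Bool) (m n : ℕ) (ω : Ω) : ℝ :=
  ((Finset.univ.filter fun t : Fin (m+1) → Fin n =>
    ∃ l : Fin m, R ω (t 0) (t l.succ) = true).card : ℝ) / (n:ℝ)^(m+1)

lemma Tstat_eq_sum (m n : ℕ) (ω : Ω) :
    Tstat R m n ω = (∑ t : Fin (m+1) → Fin n,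
      (Ev R m n t).indicator (fun _ => (1:ℝ)) ω) / (n:ℝ)^(m+1) := by
  classical
  unfold Tstat
  congr 1
  rw [Finset.card_filter]
  push_cast
  refine Finset.sum_congr rfl fun t _ => ?_
  by_cases h : ω ∈ Ev R m n t
  · rw [Set.indicator_of_mem h, if_pos (mem_Ev.1 h)]
  · rw [Set.indicator_of_notMem h, if_neg (fun hh => h (mem_Ev.2 hh))]

lemma Tstat_nonneg (m n : ℕ) (ω : Ω) : 0 ≤ Tstat R m n ω := by
  unfold Tstat; positivity

lemma Tstat_le_one (m n : ℕ) (ω : Ω) : Tstat R m n ω ≤ 1 := by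
  unfold Tstat
  rcases Nat.eq_zero_or_pos n with rfl | hn
  · simp
  · rw [div_le_one (by positivity)]
    calc ((Finset.univ.filter fun t : Fin (m+1) → Fin n =>
        ∃ l : Fin m, R ω (t 0) (t l.succ) = true).card : ℝ)
        ≤ ((Finset.univ : Finset (Fin (m+1) → Fin n)).card : ℝ) := by
          exact_mod_cast Finset.card_le_card (Finset.filter_subset _ _)
      _ = (n:ℝ)^(m+1) := by simp [Finset.card_univ]

lemma Tstat_measurable (hRmeas : Measurable R) (m n : ℕ) :
    Measurable (Tstat R m n) := by
  have : Tstat R m n = fun ω => (∑ t : Fin (m+1) → Fin n,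
      (Ev R m n t).indicator (fun _ => (1:ℝ)) ω) / (n:ℝ)^(m+1) :=
    funext fun ω => Tstat_eq_sum m n ω
  rw [this]
  exact (Finset.measurable_sum _ fun t _ =>
    (measurable_const.indicator (measurableSet_Ev hRmeas t))).div_const _

lemma integral_Tstat (P : Measure Ω) [IsProbabilityMeasure P] (hRmeas : Measurable R)
    (m n : ℕ) :
    ∫ ω, Tstat R m n ω ∂P
      = (∑ t : Fin (m+1) → Fin n, (P (Ev R m n t)).toReal) / (n:ℝ)^(m+1) := by
  simp_rw [Tstat_eq_sum]
  rw [integral_div]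
  congr 1
  rw [integral_finset_sum _ (fun t _ =>
    (integrable_const (1:ℝ)).indicator (measurableSet_Ev hRmeas t))]
  refine Finset.sum_congr rfl fun t _ => ?_
  rw [integral_indicator_const (1:ℝ) (measurableSet_Ev hRmeas t), smul_eq_mul, mul_one]
  rfl

lemma P_Ev_eq (P : Measure Ω) (hRmeas : Measurable R)
    (hexch : ∀ (k : ℕ) (σ : Equiv.Perm (Fin k)),
      Measure.map (fun ω => fun p : Fin k × Fin k => R ω (σ p.1) (σ p.2)) P
        = Measure.map (fun ω => fun p : Fin k × Fin k => R ω p.1 p.2) P)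
    {m n : ℕ} (h : m + 1 ≤ n) (t : Fin (m+1) → Fin n) (ht : Function.Injective t) :
    P (Ev R m n t) = P (Qset R m) := by
  obtain ⟨σ, hσ⟩ := exists_perm_extend h t ht
  set A : Set (Fin n × Fin n → Bool) :=
    ⋃ l : Fin m, (fun g : Fin n × Fin n → Bool =>
      g (Fin.castLE h 0, Fin.castLE h l.succ)) ⁻¹' {true} with hA_def
  have hA : MeasurableSet A :=
    MeasurableSet.iUnion fun l => (measurable_pi_apply _) (measurableSet_singleton true)
  have hmap2 : Measurable (fun ω => fun p : Fin n × Fin n => R ω (σ p.1) (σ p.2)) :=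
    measurable_pi_lambda _ fun p => meas_R hRmeas _ _
  have hmap1 : Measurable (fun ω => fun p : Fin n × Fin n => R ω p.1 p.2) :=
    measurable_pi_lambda _ fun p => meas_R hRmeas _ _
  have h2 : (fun ω => fun p : Fin n × Fin n => R ω (σ p.1) (σ p.2)) ⁻¹' A = Ev R m n t := by
    ext ω
    simp only [hA_def, Set.mem_preimage, Set.mem_iUnion, Set.mem_singleton_iff, Ev]
    constructor
    · rintro ⟨l, hl⟩
      exact ⟨l, by rwa [hσ 0, hσ l.succ] at hl⟩
    · rintro ⟨l, hl⟩
      exact ⟨l, by rwa [hσ 0, hσ l.succ]⟩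
  have h1 : (fun ω => fun p : Fin n × Fin n => R ω p.1 p.2) ⁻¹' A = Qset R m := by
    ext ω
    simp only [hA_def, Set.mem_preimage, Set.mem_iUnion, Set.mem_singleton_iff, Qset]
    constructor
    · rintro ⟨l, hl⟩
      refine ⟨l, ?_⟩
      simpa [Fin.coe_castLE, Fin.val_succ] using hl
    · rintro ⟨l, hl⟩
      refine ⟨l, ?_⟩
      simpa [Fin.coe_castLE, Fin.val_succ] using hl
  calc P (Ev R m n t) = Measure.map (fun ω => fun p : Fin n × Fin n => R ω (σ p.1) (σ p.2)) P A := by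
        rw [Measure.map_apply hmap2 hA, h2]
    _ = Measure.map (fun ω => fun p : Fin n × Fin n => R ω p.1 p.2) P A := by rw [hexch n σ]
    _ = P (Qset R m) := by rw [Measure.map_apply hmap1 hA, h1]

lemma toReal_prob_le_one {P : Measure Ω} [IsProbabilityMeasure P] (s : Set Ω) :
    (P s).toReal ≤ 1 := by
  have h := prob_le_one (μ := P) (s := s)
  simpa using ENNReal.toReal_mono ENNReal.one_ne_top h

lemma tendsto_integral_Tstat (P : Measure Ω) [IsProbabilityMeasure P]
    (hRmeas : Measurable R)
    (hexch : ∀ (k : ℕ) (σ : Equiv.Perm (Fin k)),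
      Measure.map (fun ω => fun p : Fin k × Fin k => R ω (σ p.1) (σ p.2)) P
        = Measure.map (fun ω => fun p : Fin k × Fin k => R ω p.1 p.2) P)
    (m : ℕ) :
    Tendsto (fun n => ∫ ω, Tstat R m n ω ∂P) atTop (𝓝 (P (Qset R m)).toReal) := by
  classical
  set q : ℝ := (P (Qset R m)).toReal with hq_def
  have hq0 : 0 ≤ q := ENNReal.toReal_nonneg
  have hq1 : q ≤ 1 := toReal_prob_le_one _
  have hbound : ∀ᶠ n : ℕ in atTop,
      |(∫ ω, Tstat R m n ω ∂P) - q| ≤ 1 - (n.descFactorial (m+1) : ℝ)/(n:ℝ)^(m+1) := by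
    filter_upwards [eventually_ge_atTop (m+1)] with n hn
    have hn0 : (0:ℝ) < n := by exact_mod_cast lt_of_lt_of_le (Nat.succ_pos m) hn
    have hN : (0:ℝ) < (n:ℝ)^(m+1) := by positivity
    set D : ℝ := (n.descFactorial (m+1) : ℝ) with hD_def
    set N : ℝ := (n:ℝ)^(m+1) with hN_def
    rw [integral_Tstat P hRmeas m n]
    rw [← Finset.sum_filter_add_sum_filter_not Finset.univ
      (fun t : Fin (m+1) → Fin n => Function.Injective t)]
    have hinj : ∑ t ∈ Finset.univ.filter (fun t : Fin (m+1) → Fin n => Function.Injective t),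
        (P (Ev R m n t)).toReal = D * q := by
      have hc : ∀ t ∈ Finset.univ.filter (fun t : Fin (m+1) → Fin n => Function.Injective t),
          (P (Ev R m n t)).toReal = q := fun t htm => by
        rw [P_Ev_eq P hRmeas hexch hn t (Finset.mem_filter.1 htm).2]
      rw [Finset.sum_congr rfl hc, Finset.sum_const, card_inj_tuples, nsmul_eq_mul]
    rw [hinj]
    set S := ∑ t ∈ Finset.univ.filter
      (fun t : Fin (m+1) → Fin n => ¬ Function.Injective t), (P (Ev R m n t)).toReal with hS_def
    have hdleN : n.descFactorial (m+1) ≤ n^(m+1) := Nat.descFactorial_le_pow n (m+1)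
    have hdle : D ≤ N := by rw [hD_def, hN_def]; exact_mod_cast hdleN
    have hScard : S ≤ N - D := by
      have hcard : (Finset.univ.filter
          (fun t : Fin (m+1) → Fin n => ¬ Function.Injective t)).card
          = n^(m+1) - n.descFactorial (m+1) := by
        have h2 := Finset.card_filter_add_card_filter_not
          (s := (Finset.univ : Finset (Fin (m+1) → Fin n)))
          (p := fun t => Function.Injective t)
        rw [card_inj_tuples] at h2
        simp only [Finset.card_univ, Fintype.card_fun, Fintype.card_fin] at h2
        omega
      calc S ≤ ∑ _t ∈ (Finset.univ.filter
              (fun t : Fin (m+1) → Fin n => ¬ Function.Injective t)), (1:ℝ) :=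
            Finset.sum_le_sum fun t _ => toReal_prob_le_one _
        _ = ((n^(m+1) - n.descFactorial (m+1) : ℕ) : ℝ) := by
            rw [Finset.sum_const, hcard]; simp
        _ = N - D := by
            rw [hN_def, hD_def]; push_cast [Nat.cast_sub hdleN]; ring
    have hS0 : 0 ≤ S := Finset.sum_nonneg fun t _ => ENNReal.toReal_nonneg
    have e1 : (D * q + S)/N - q = (D * q + S - q * N)/N := by field_simp
    rw [e1, abs_div, abs_of_pos hN, div_le_iff₀ hN]
    have e2 : (1 - D/N) * N = N - D := by
      rw [sub_mul, one_mul, div_mul_cancel₀ _ (ne_of_gt hN)]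
    rw [e2, abs_le]
    constructor
    · nlinarith
    · nlinarith
  have hzero : Tendsto (fun n : ℕ => 1 - (n.descFactorial (m+1) : ℝ)/(n:ℝ)^(m+1)) atTop (𝓝 0) := by
    have h3 := (tendsto_const_nhds (x := (1:ℝ))).sub (tendsto_descFactorial (m+1))
    simpa using h3
  rw [tendsto_iff_dist_tendsto_zero]
  exact squeeze_zero' (Eventually.of_forall fun n => dist_nonneg)
    (hbound.mono fun n hn => by rwa [Real.dist_eq]) hzero

lemma tendsto_Qset (P : Measure Ω) [IsProbabilityMeasure P] (hRmeas : Measurable R)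
    (hno : ∀ᵐ ω ∂P, ∃ j, j ≠ 0 ∧ R ω 0 j = true) :
    Tendsto (fun m => (P (Qset R m)).toReal) atTop (𝓝 1) := by
  have hmono : Monotone (Qset R) := by
    intro a b hab ω hω
    rw [mem_Qset] at hω ⊢
    obtain ⟨l, hl⟩ := hω
    exact ⟨⟨l, lt_of_lt_of_le l.2 hab⟩, hl⟩
  have hsub : {ω | ∃ j, j ≠ 0 ∧ R ω 0 j = true} ⊆ ⋃ m, Qset R m := by
    rintro ω ⟨j, hj0, hj⟩
    refine Set.mem_iUnion.2 ⟨j, mem_Qset.2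
      ⟨⟨j - 1, Nat.sub_lt (Nat.pos_of_ne_zero hj0) one_pos⟩, ?_⟩⟩
    show R ω 0 ((j - 1) + 1) = true
    rwa [Nat.sub_add_cancel (Nat.one_le_iff_ne_zero.2 hj0)]
  have hP1 : P (⋃ m, Qset R m) = 1 := by
    have hmeas : MeasurableSet (⋃ m, Qset R m) :=
      MeasurableSet.iUnion fun m => measurableSet_Qset hRmeas m
    rw [← prob_compl_eq_zero_iff hmeas]
    have hss : ∀ᵐ ω ∂P, ω ∈ ⋃ m, Qset R m := hno.mono fun ω h => hsub h
    rw [ae_iff] at hss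
    convert hss using 2
    rfl
  have h2 : Tendsto (fun m => P (Qset R m)) atTop (𝓝 1) := by
    have h3 := tendsto_measure_iUnion_atTop (μ := P) hmono
    rwa [hP1] at h3
  have h4 := (ENNReal.tendsto_toReal (by simp : (1:ENNReal) ≠ ⊤)).comp h2
  exact h4

end Prob

section PW2
variable {R : ℕ → ℕ → Bool} {g : ℕ → ℝ}
  (hR' : Equivalence fun i j : ℕ => R i j = true)
  (htend : ∀ i, Tendsto (fun n => (rankedSize R n i : ℝ) / n) atTop (𝓝 (g i)))
include hR' htend

lemma summable_phi (m : ℕ) : Summable fun i => phi m (g i) :=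
  (summable_f (f_nonneg htend) (sum_range_f_le_one hR' htend)).of_nonneg_of_le
    (fun i => phi_nonneg (f_nonneg htend i) (f_le_one hR' htend i))
    (fun i => phi_le_self (f_nonneg htend i) (f_le_one hR' htend i))

lemma tsum_phi_nonneg (m : ℕ) : 0 ≤ ∑' i, phi m (g i) :=
  tsum_nonneg fun i => phi_nonneg (f_nonneg htend i) (f_le_one hR' htend i)

lemma tsum_phi_le_one (m : ℕ) : ∑' i, phi m (g i) ≤ 1 :=
  le_trans (Summable.tsum_le_tsum
      (fun i => phi_le_self (f_nonneg htend i) (f_le_one hR' htend i))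
      (summable_phi hR' htend m)
      (summable_f (f_nonneg htend) (sum_range_f_le_one hR' htend)))
    (tsum_f_le_one hR' htend)

end PW2
end Stmt9


/-- If `Π` is an exchangeable random partition of `ℕ` (encoded by a random
equivalence relation `R`) whose asymptotic ranked frequencies are `f`, and if almost
surely the singleton `{1}` (element `0` here) is not a block of `Π`, then the asymptotic
ranked frequencies sum to `1` almost surely. -/
theorem stmt_9 {Ω : Type*} [MeasurableSpace Ω] (P : Measure Ω) [IsProbabilityMeasure P]
    (R : Ω → ℕ → ℕ → Bool) (hRmeas : Measurable R)
    (hEquiv : ∀ᵐ ω ∂P, Equivalence fun i j => R ω i j = true)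
    (hexch : ∀ (k : ℕ) (σ : Equiv.Perm (Fin k)),
      Measure.map (fun ω => fun p : Fin k × Fin k => R ω (σ p.1) (σ p.2)) P
        = Measure.map (fun ω => fun p : Fin k × Fin k => R ω p.1 p.2) P)
    (f : Ω → ℕ → ℝ)
    (hfreq : ∀ᵐ ω ∂P, ∀ i,
      Tendsto (fun k => (rankedSize (R ω) k i : ℝ) / k) atTop (𝓝 (f ω i)))
    (hnosingleton : ∀ᵐ ω ∂P, ∃ j, j ≠ 0 ∧ R ω 0 j = true) :
    ∀ᵐ ω ∂P, ∑' i, f ω i = 1 := by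
  classical
  set H : ℕ → Ω → ℝ := fun m ω => ∑' i, Stmt9.phi m (f ω i) with hH_def
  set F : Ω → ℝ := fun ω => ∑' i, f ω i with hF_def
  have hae : ∀ᵐ ω ∂P, (Equivalence fun i j => R ω i j = true) ∧ ∀ i,
      Tendsto (fun k => (rankedSize (R ω) k i : ℝ) / k) atTop (𝓝 (f ω i)) := hEquiv.and hfreq
  -- Step 1 : pointwise convergence of the statistics to H m
  have hstep1 : ∀ m, ∀ᵐ ω ∂P,
      Tendsto (fun n => Stmt9.Tstat R m n ω) atTop (𝓝 (H m ω)) := by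
    intro m
    filter_upwards [hae] with ω hω
    obtain ⟨hR, htend⟩ := hω
    have heq : ∀ᶠ n : ℕ in atTop,
        (∑' i, Stmt9.phi m ((rankedSize (R ω) n i : ℝ)/n)) = Stmt9.Tstat R m n ω := by
      filter_upwards [eventually_ge_atTop 1] with n hn
      exact (Stmt9.master_identity hR hn).symm
    exact (Stmt9.tendsto_tsum_phi_n hR htend m).congr' heq
  have hTmeas : ∀ m n, AEStronglyMeasurable (Stmt9.Tstat R m n) P := fun m n =>
    (Stmt9.Tstat_measurable hRmeas m n).aestronglyMeasurable
  have hHmeas : ∀ m, AEStronglyMeasurable (H m) P := fun m =>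
    aestronglyMeasurable_of_tendsto_ae atTop (fun n => hTmeas m n) (hstep1 m)
  have hHint : ∀ m, Integrable (H m) P := by
    intro m
    refine Integrable.mono' (integrable_const 1) (hHmeas m) ?_
    filter_upwards [hae] with ω hω
    obtain ⟨hR, htend⟩ := hω
    rw [Real.norm_eq_abs, abs_of_nonneg (Stmt9.tsum_phi_nonneg hR htend m)]
    exact Stmt9.tsum_phi_le_one hR htend m
  -- Step 2 : ∫ H m = (P (Qset m)).toReal
  have hint_eq : ∀ m, ∫ ω, H m ω ∂P = (P (Stmt9.Qset R m)).toReal := by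
    intro m
    have hdct : Tendsto (fun n => ∫ ω, Stmt9.Tstat R m n ω ∂P) atTop (𝓝 (∫ ω, H m ω ∂P)) := by
      refine tendsto_integral_of_dominated_convergence (fun _ => (1:ℝ))
        (fun n => hTmeas m n) (integrable_const 1) (fun n => ?_) (hstep1 m)
      refine Eventually.of_forall fun ω => ?_
      rw [Real.norm_eq_abs, abs_of_nonneg (Stmt9.Tstat_nonneg m n ω)]
      exact Stmt9.Tstat_le_one m n ω
    exact tendsto_nhds_unique hdct (Stmt9.tendsto_integral_Tstat P hRmeas hexch m)
  -- Step 3 : F is integrable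
  have hstep3 : ∀ᵐ ω ∂P, Tendsto (fun m => H m ω) atTop (𝓝 (F ω)) := by
    filter_upwards [hae] with ω hω
    obtain ⟨hR, htend⟩ := hω
    exact Stmt9.tendsto_tsum_phi_m hR htend
  have hFmeas : AEStronglyMeasurable F P :=
    aestronglyMeasurable_of_tendsto_ae atTop hHmeas hstep3
  have hFint : Integrable F P := by
    refine Integrable.mono' (integrable_const 1) hFmeas ?_
    filter_upwards [hae] with ω hω
    obtain ⟨hR, htend⟩ := hω
    rw [Real.norm_eq_abs, abs_of_nonneg (tsum_nonneg (Stmt9.f_nonneg htend))]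
    exact Stmt9.tsum_f_le_one hR htend
  -- Step 4 : ∫ F = 1
  have hmono : ∀ᵐ ω ∂P, Monotone fun m => H m ω := by
    filter_upwards [hae] with ω hω
    obtain ⟨hR, htend⟩ := hω
    exact Stmt9.mono_tsum_phi hR htend
  have h4 : Tendsto (fun m => ∫ ω, H m ω ∂P) atTop (𝓝 (∫ ω, F ω ∂P)) :=
    integral_tendsto_of_tendsto_of_monotone hHint hFint hmono hstep3
  have h5 : Tendsto (fun m => ∫ ω, H m ω ∂P) atTop (𝓝 1) := by
    have := Stmt9.tendsto_Qset P hRmeas hnosingleton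
    refine this.congr fun m => (hint_eq m).symm
  have hF1 : ∫ ω, F ω ∂P = 1 := tendsto_nhds_unique h4 h5
  -- Step 5 : conclude
  have h6 : ∫ ω, (1 - F ω) ∂P = 0 := by
    rw [integral_sub (integrable_const 1) hFint, hF1]
    simp
  have h7 : (fun ω => 1 - F ω) =ᵐ[P] 0 := by
    refine (integral_eq_zero_iff_of_nonneg_ae ?_ ((integrable_const 1).sub hFint)).1 h6
    filter_upwards [hae] with ω hω
    obtain ⟨hR, htend⟩ := hω
    have := Stmt9.tsum_f_le_one hR htend
    simp only [Pi.zero_apply, Pi.sub_apply]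
    linarith
  filter_upwards [h7] with ω hω
  have h8 : 1 - F ω = 0 := hω
  have h9 : F ω = 1 := by linarith
  rw [hF_def] at h9
  simpa using h9
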